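/- With notation as in the Alexander trick: if h sends every straight line segment contained in B to a concatenation of at most m straight line segments, then for every t ∈ (0,1], the map h_t sends every straight line segment contained in B to a concatenation of at most m+2 straight line segments. -/

import Mathlib

/-- `S` is a concatenation of at most `m` straight segments. -/
def IsPLOfAtMost (m : ℕ) (S : Set (EuclideanSpace ℝ (Fin 3))) : Prop :=
  ∃ k ≤ m, ∃ e : Fin k → EuclideanSpace ℝ (Fin 3) × EuclideanSpace ℝ (Fin 3),
    S = ⋃ i, segment ℝ (e i).1 (e i).2

local notation "E3" => EuclideanSpace ℝ (Fin 3)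

lemma pl_union_seg {n : ℕ} {S : Set E3} (hS : IsPLOfAtMost n S) (x y : E3) :
    IsPLOfAtMost (n + 1) (S ∪ segment ℝ x y) := by
  obtain ⟨k, hk, e, rfl⟩ := hS
  refine ⟨k + 1, by omega, Fin.snoc e (x, y), ?_⟩
  ext z
  simp only [Set.mem_union, Set.mem_iUnion]
  constructor
  · rintro (⟨i, hi⟩ | hz)
    · exact ⟨i.castSucc, by simpa [Fin.snoc_castSucc] using hi⟩
    · exact ⟨Fin.last k, by simpa [Fin.snoc_last] using hz⟩
  · rintro ⟨i, hi⟩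
    induction i using Fin.lastCases with
    | last => right; simpa [Fin.snoc_last] using hi
    | cast j => left; exact ⟨j, by simpa [Fin.snoc_castSucc] using hi⟩

lemma pl_affine_image {n : ℕ} {S : Set E3} (hS : IsPLOfAtMost n S) (φ : E3 →ᵃ[ℝ] E3) :
    IsPLOfAtMost n (φ '' S) := by
  obtain ⟨k, hk, e, rfl⟩ := hS
  exact ⟨k, hk, fun i => (φ (e i).1, φ (e i).2), by
    rw [Set.image_iUnion]; simp_rw [image_segment]⟩

lemma pl_mono {n n' : ℕ} {S : Set E3} (hS : IsPLOfAtMost n S) (hn : n ≤ n') :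
    IsPLOfAtMost n' S := by
  obtain ⟨k, hk, e, he⟩ := hS
  exact ⟨k, le_trans hk hn, e, he⟩

lemma frontier_left {T : Set E3} (hT : IsClosed T) {f : ℝ → E3} (hf : Continuous f)
    {w v : ℝ} (hwv : w < v) (hout : ∀ u ∈ Set.Ico w v, f u ∉ T) (hin : f v ∈ T) :
    f v ∈ frontier T := by
  rw [hT.frontier_eq]
  refine ⟨hin, fun hintm => ?_⟩
  have hopen : IsOpen (f ⁻¹' interior T) := isOpen_interior.preimage hf
  obtain ⟨ε, hε, hball⟩ := Metric.isOpen_iff.1 hopen v hintm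
  set u := max w (v - ε / 2) with hu
  have huv : u < v := max_lt hwv (by linarith)
  have hmem : u ∈ Set.Ico w v := ⟨le_max_left _ _, huv⟩
  have : u ∈ Metric.ball v ε := by
    rw [Metric.mem_ball, Real.dist_eq, abs_of_nonpos (by linarith)]
    have : v - ε / 2 ≤ u := le_max_right _ _
    linarith
  exact hout u hmem (interior_subset (hball this))

lemma frontier_right {T : Set E3} (hT : IsClosed T) {f : ℝ → E3} (hf : Continuous f)
    {w v : ℝ} (hwv : v < w) (hout : ∀ u ∈ Set.Ioc v w, f u ∉ T) (hin : f v ∈ T) :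
    f v ∈ frontier T := by
  rw [hT.frontier_eq]
  refine ⟨hin, fun hintm => ?_⟩
  have hopen : IsOpen (f ⁻¹' interior T) := isOpen_interior.preimage hf
  obtain ⟨ε, hε, hball⟩ := Metric.isOpen_iff.1 hopen v hintm
  set u := min w (v + ε / 2) with hu
  have huv : v < u := lt_min hwv (by linarith)
  have hmem : u ∈ Set.Ioc v w := ⟨huv, min_le_left _ _⟩
  have : u ∈ Metric.ball v ε := by
    rw [Metric.mem_ball, Real.dist_eq, abs_of_nonneg (by linarith)]
    have : u ≤ v + ε / 2 := min_le_right _ _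
    linarith
  exact hout u hmem (interior_subset (hball this))

open Classical in
/-- Alexander trick arc count: if `h` sends straight arcs in `B` to at most `m`
straight arcs, then each `h_t` sends straight arcs to at most `m + 2` straight arcs. -/
theorem stmt_5 (B : Set (EuclideanSpace ℝ (Fin 3))) (hBconv : Convex ℝ B)
    (hBcomp : IsCompact B)
    (h : EuclideanSpace ℝ (Fin 3) → EuclideanSpace ℝ (Fin 3))
    (hcont : ContinuousOn h B) (hmaps : Set.MapsTo h B B)
    (hfix : ∀ x ∈ frontier B, h x = x)
    (p : EuclideanSpace ℝ (Fin 3)) (hp : p ∈ interior B)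
    (s : ℝ → EuclideanSpace ℝ (Fin 3) → EuclideanSpace ℝ (Fin 3))
    (hs : ∀ r x, s r x = r • (x - p) + p)
    (g : ℝ → EuclideanSpace ℝ (Fin 3) → EuclideanSpace ℝ (Fin 3))
    (hg : ∀ r x, g r x = s r (h (s r⁻¹ x)))
    (H : ℝ → EuclideanSpace ℝ (Fin 3) → EuclideanSpace ℝ (Fin 3))
    (hH : ∀ t x, H t x = if x ∈ s t '' B then g t x else x)
    (m : ℕ)
    (hstraight : ∀ a b, segment ℝ a b ⊆ B → IsPLOfAtMost m (h '' segment ℝ a b)) :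
    ∀ t ∈ Set.Ioc (0 : ℝ) 1, ∀ a b, segment ℝ a b ⊆ B →
      IsPLOfAtMost (m + 2) (H t '' segment ℝ a b) := by
  rintro t ⟨ht0, ht1⟩ a b hseg
  have htne : t ≠ 0 := ne_of_gt ht0
  -- s t as affine maps
  set φ : EuclideanSpace ℝ (Fin 3) →ᵃ[ℝ] EuclideanSpace ℝ (Fin 3) :=
    AffineMap.homothety p t with hφdef
  set ψ : EuclideanSpace ℝ (Fin 3) →ᵃ[ℝ] EuclideanSpace ℝ (Fin 3) :=
    AffineMap.homothety p t⁻¹ with hψdef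
  have hφ : ∀ x, s t x = φ x := by
    intro x; rw [hs, hφdef, AffineMap.homothety_apply, vsub_eq_sub, vadd_eq_add]
  have hψ : ∀ x, s t⁻¹ x = ψ x := by
    intro x; rw [hs, hψdef, AffineMap.homothety_apply, vsub_eq_sub, vadd_eq_add]
  have hinv1 : ∀ x, s t⁻¹ (s t x) = x := by
    intro x
    rw [hs, hs]
    simp [smul_smul, inv_mul_cancel₀ htne]
  have hcontst : Continuous (s t) := by
    have : s t = ⇑φ := funext hφ
    rw [this]; exact AffineMap.homothety_continuous p t
  have hcontinv : Continuous (s t⁻¹) := by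
    have : s t⁻¹ = ⇑ψ := funext hψ
    rw [this]; exact AffineMap.homothety_continuous p t⁻¹
  set Bt := s t '' B with hBtdef
  have hBtconv : Convex ℝ Bt := by
    rw [hBtdef, funext hφ]; exact hBconv.affine_image φ
  have hBtcomp : IsCompact Bt := hBcomp.image hcontst
  have hBtclosed : IsClosed Bt := hBtcomp.isClosed
  have key_mem : ∀ x ∈ Bt, H t x = g t x := by
    intro x hx; rw [hH]; exact if_pos hx
  have key_nmem : ∀ x ∉ Bt, H t x = x := by
    intro x hx; rw [hH]; exact if_neg hx
  -- fixed points on the frontier of Bt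
  have hfixBt : ∀ x ∈ frontier Bt, g t x = x := by
    intro x hx
    have hpre : Bt = s t⁻¹ ⁻¹' B := by
      ext y
      constructor
      · rintro ⟨z, hz, rfl⟩; simpa [hinv1] using hz
      · intro hy
        refine ⟨s t⁻¹ y, hy, ?_⟩
        rw [hs, hs]
        simp [smul_smul, mul_inv_cancel₀ htne]
    have hfr : s t⁻¹ x ∈ frontier B := by
      have := hcontinv.frontier_preimage_subset B
      rw [← hpre] at this
      exact this hx
    rw [hg, hfix _ hfr]
    rw [hs, hs]
    simp [smul_smul, mul_inv_cancel₀ htne]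
  -- parametrize the segment
  set f : ℝ →ᵃ[ℝ] EuclideanSpace ℝ (Fin 3) := AffineMap.lineMap a b with hfdef
  have hfseg : segment ℝ a b = f '' Set.Icc 0 1 := segment_eq_image_lineMap ℝ a b
  have hfcont : Continuous f := AffineMap.lineMap_continuous
  set S : Set ℝ := Set.Icc 0 1 ∩ f ⁻¹' Bt with hSdef
  by_cases hSne : S.Nonempty
  · -- S is a closed interval [u₁, u₂]
    have hSconv : Convex ℝ S := (convex_Icc 0 1).inter (hBtconv.affine_preimage f)
    have hScomp : IsCompact S :=
      isCompact_Icc.inter_right (hBtclosed.preimage hfcont)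
    have hSIcc : S = Set.Icc (sInf S) (sSup S) :=
      eq_Icc_of_connected_compact ⟨hSne, hSconv.isPreconnected⟩ hScomp
    set u₁ := sInf S with hu₁def
    set u₂ := sSup S with hu₂def
    have hle : u₁ ≤ u₂ := Set.nonempty_Icc.1 (hSIcc ▸ hSne)
    have hu₁S : u₁ ∈ S := hSIcc ▸ Set.left_mem_Icc.2 hle
    have hu₂S : u₂ ∈ S := hSIcc ▸ Set.right_mem_Icc.2 hle
    have h0u₁ : 0 ≤ u₁ := hu₁S.1.1
    have hu₂1 : u₂ ≤ 1 := hu₂S.1.2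
    set c := f u₁ with hcdef
    set d := f u₂ with hddef
    have hcBt : c ∈ Bt := hu₁S.2
    have hdBt : d ∈ Bt := hu₂S.2
    have hmemS : ∀ u, u ∈ Set.Icc (0:ℝ) 1 → f u ∈ Bt → u ∈ Set.Icc u₁ u₂ := by
      intro u hu hfu; rw [← hSIcc]; exact ⟨hu, hfu⟩
    have hnmemS : ∀ u, u ∉ Set.Icc u₁ u₂ → u ∉ S := by
      intro u hu hc; exact hu (hSIcc ▸ hc : u ∈ Set.Icc u₁ u₂)
    -- segment pieces
    have hseg1 : f '' Set.Icc 0 u₁ = segment ℝ a c := by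
      rw [← segment_eq_Icc h0u₁, image_segment]
      simp [hcdef, hfdef]
    have hseg2 : f '' Set.Icc u₁ u₂ = segment ℝ c d := by
      rw [← segment_eq_Icc hle, image_segment]
    have hseg3 : f '' Set.Icc u₂ 1 = segment ℝ d b := by
      rw [← segment_eq_Icc hu₂1, image_segment]
      simp [hddef, hfdef]
    have hsegcd_sub : segment ℝ c d ⊆ Bt := hBtconv.segment_subset hcBt hdBt
    have hsegcd_ab : segment ℝ c d ⊆ segment ℝ a b := by
      rw [← hseg2, hfseg]
      exact Set.image_mono (fun u hu => ⟨le_trans h0u₁ hu.1, le_trans hu.2 hu₂1⟩)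
    -- the middle image
    set G := g t '' segment ℝ c d with hGdef
    have hGpl : IsPLOfAtMost m G := by
      obtain ⟨xc, hxcB, hxc⟩ := hcBt
      obtain ⟨xd, hxdB, hxd⟩ := hdBt
      have hsub : segment ℝ xc xd ⊆ B := hBconv.segment_subset hxcB hxdB
      have hψc : ψ c = xc := by rw [← hψ, ← hxc, hinv1]
      have hψd : ψ d = xd := by rw [← hψ, ← hxd, hinv1]
      have h1 : ⇑ψ '' segment ℝ c d = segment ℝ xc xd := by
        rw [image_segment, hψc, hψd]
      have h2 : G = φ '' (h '' (⇑ψ '' segment ℝ c d)) := by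
        rw [Set.image_image, Set.image_image]
        show g t '' segment ℝ c d = _
        exact Set.image_congr fun x _ => by rw [hg, hφ, hψ]
      rw [h2, h1]
      exact pl_affine_image (hstraight xc xd hsub) φ
    -- endpoint fixed points
    have hgc : u₁ ≠ 0 → g t c = c := by
      intro h0
      have h0lt : 0 < u₁ := lt_of_le_of_ne h0u₁ (Ne.symm h0)
      refine hfixBt c (frontier_left hBtclosed hfcont h0lt ?_ hcBt)
      intro u hu hcon
      exact (hnmemS u fun hc => absurd hc.1 (not_le.2 hu.2))
        ⟨⟨hu.1, le_trans (le_of_lt hu.2) (le_trans hle hu₂1)⟩, hcon⟩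
    have hgd : u₂ ≠ 1 → g t d = d := by
      intro h1
      have h1lt : u₂ < 1 := lt_of_le_of_ne hu₂1 h1
      refine hfixBt d (frontier_right hBtclosed hfcont h1lt ?_ hdBt)
      intro u hu hcon
      exact (hnmemS u fun hc => absurd hc.2 (not_le.2 hu.1))
        ⟨⟨le_trans h0u₁ (le_trans hle (le_of_lt hu.1)), hu.2⟩, hcon⟩
    set P₁ : EuclideanSpace ℝ (Fin 3) × EuclideanSpace ℝ (Fin 3) :=
      if u₁ = 0 then (g t c, g t c) else (a, c) with hP₁def
    set P₂ : EuclideanSpace ℝ (Fin 3) × EuclideanSpace ℝ (Fin 3) :=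
      if u₂ = 1 then (g t d, g t d) else (d, b) with hP₂def
    have hmain : H t '' segment ℝ a b = (G ∪ segment ℝ P₁.1 P₁.2) ∪ segment ℝ P₂.1 P₂.2 := by
      ext y
      constructor
      · rintro ⟨x, hx, rfl⟩
        rw [hfseg] at hx
        obtain ⟨u, hu, rfl⟩ := hx
        by_cases hfu : f u ∈ Bt
        · left; left
          rw [key_mem _ hfu]
          exact ⟨f u, hseg2 ▸ ⟨u, hmemS u hu hfu, rfl⟩, rfl⟩
        · rw [key_nmem _ hfu]
          have hu' : u ∉ Set.Icc u₁ u₂ := fun hc => hfu (hSIcc ▸ Set.mem_Icc.2 ⟨hc.1, hc.2⟩ : u ∈ S).2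
          rw [Set.mem_Icc, not_and_or, not_le, not_le] at hu'
          rcases hu' with hlt | hgt
          · left; right
            have h0 : u₁ ≠ 0 := fun h0 => absurd (h0 ▸ hlt) (not_lt.2 hu.1)
            rw [hP₁def, if_neg h0]
            exact hseg1 ▸ ⟨u, ⟨hu.1, le_of_lt hlt⟩, rfl⟩
          · right
            have h1 : u₂ ≠ 1 := fun h1 => absurd (h1 ▸ hgt) (not_lt.2 hu.2)
            rw [hP₂def, if_neg h1]
            exact hseg3 ▸ ⟨u, ⟨le_of_lt hgt, hu.2⟩, rfl⟩
      · rintro ((hy | hy) | hy)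
        · obtain ⟨x, hx, rfl⟩ := hy
          exact ⟨x, hsegcd_ab hx, key_mem _ (hsegcd_sub hx)⟩
        · by_cases h0 : u₁ = 0
          · rw [hP₁def, if_pos h0] at hy
            simp only [segment_same, Set.mem_singleton_iff] at hy
            have hca : c = a := by rw [hcdef, h0]; simp [hfdef]
            subst hy
            refine ⟨a, left_mem_segment ℝ a b, ?_⟩
            show H t a = g t c
            rw [key_mem _ (hca ▸ hcBt), hca]
          · rw [hP₁def, if_neg h0] at hy
            rw [← hseg1] at hy
            obtain ⟨u, hu, rfl⟩ := hy
            have huab : f u ∈ segment ℝ a b := by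
              rw [hfseg]
              exact ⟨u, ⟨hu.1, le_trans hu.2 (le_trans hle hu₂1)⟩, rfl⟩
            rcases eq_or_lt_of_le hu.2 with heq | hlt
            · refine ⟨f u, huab, ?_⟩
              rw [heq]
              show H t c = c
              rw [key_mem _ hcBt]
              exact hgc h0
            · have hfu : f u ∉ Bt := by
                intro hc
                exact (hnmemS u fun hc' => absurd hc'.1 (not_le.2 hlt))
                  ⟨⟨hu.1, le_trans (le_of_lt hlt) (le_trans hle hu₂1)⟩, hc⟩
              exact ⟨f u, huab, key_nmem _ hfu⟩
        · by_cases h1 : u₂ = 1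
          · rw [hP₂def, if_pos h1] at hy
            simp only [segment_same, Set.mem_singleton_iff] at hy
            have hdb : d = b := by rw [hddef, h1]; simp [hfdef]
            subst hy
            refine ⟨b, right_mem_segment ℝ a b, ?_⟩
            show H t b = g t d
            rw [key_mem _ (hdb ▸ hdBt), hdb]
          · rw [hP₂def, if_neg h1] at hy
            rw [← hseg3] at hy
            obtain ⟨u, hu, rfl⟩ := hy
            have huab : f u ∈ segment ℝ a b := by
              rw [hfseg]
              exact ⟨u, ⟨le_trans h0u₁ (le_trans hle hu.1), hu.2⟩, rfl⟩
            rcases eq_or_lt_of_le hu.1 with heq | hlt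
            · refine ⟨f u, huab, ?_⟩
              rw [← heq]
              show H t d = d
              rw [key_mem _ hdBt]
              exact hgd h1
            · have hfu : f u ∉ Bt := by
                intro hc
                exact (hnmemS u fun hc' => absurd hc'.2 (not_le.2 hlt))
                  ⟨⟨le_trans h0u₁ (le_trans hle (le_of_lt hlt)), hu.2⟩, hc⟩
              exact ⟨f u, huab, key_nmem _ hfu⟩
    rw [hmain]
    exact pl_union_seg (pl_union_seg hGpl P₁.1 P₁.2) P₂.1 P₂.2
  · -- empty intersection: H t is the identity on the segment
    refine ⟨1, by omega, ![(a, b)], ?_⟩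
    have himg : H t '' segment ℝ a b = segment ℝ a b := by
      have : ∀ x ∈ segment ℝ a b, H t x = x := by
        intro x hx
        apply key_nmem
        intro hc
        rw [hfseg] at hx
        obtain ⟨u, hu, rfl⟩ := hx
        exact hSne ⟨u, hu, hc⟩
      calc H t '' segment ℝ a b = id '' segment ℝ a b := Set.image_congr this
        _ = segment ℝ a b := Set.image_id _
    rw [himg]
    ext z; simp
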